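/- (Consensus iterate identity, equation (cons2).) Let (Ω, μ) be a σ-finite measure space, N ≥ 1, and let p_0^{(1)}, …, p_0^{(N)} : Ω → ℝ be strictly positive measurable probability densities such that for every vector v ∈ ℝ^N with v_j ≥ 0 and ∑_j v_j = 1, the integral ∫ ∏_{j=1}^N p_0^{(j)}(x)^{v_j} dμ(x) is positive and finite. Let Ω̂ be an N×N matrix with nonnegative entries whose rows each sum to 1, and define the consensus iteration p_n^{(i)}(x) = ∏_{j=1}^N p_{n-1}^{(j)}(x)^{Ω̂_{ij}} / ∫ ∏_{j=1}^N p_{n-1}^{(j)}(y)^{Ω̂_{ij}} dμ(y). Then for every n ≥ 0 and every node i, p_n^{(i)}(x) = ∏_{j=1}^N p_0^{(j)}(x)^{(Ω̂^n)_{ij}} / ∫ ∏_{j=1}^N p_0^{(j)}(y)^{(Ω̂^n)_{ij}} dμ(y), i.e., the n-th consensus iterate at node i is the normalized weighted geometric mean of the initial densities with weights given by the (i,j) entries of the n-th power of the consensus matrix. -/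

import Mathlib

open MeasureTheory

/-- Consensus iterate identity: starting from strictly positive probability densities
`p0 j` and iterating normalized weighted geometric-mean fusion with a row-stochastic
consensus matrix `M`, the `n`-th iterate at node `i` is the normalized weighted
geometric mean of the initial densities with weights `(M ^ n) i j`. -/
theorem consensus_iterate_eq_geometric_mean_of_matrix_power
    {Ω : Type*} [MeasurableSpace Ω] (μ : Measure Ω) [SigmaFinite μ]
    (N : ℕ) (hN : 1 ≤ N)
    (p0 : Fin N → Ω → ℝ)
    (hmeas : ∀ j, Measurable (p0 j))
    (hpos : ∀ j x, 0 < p0 j x)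
    (hnorm : ∀ j, ∫ x, p0 j x ∂μ = 1)
    (hint : ∀ v : Fin N → ℝ, (∀ j, 0 ≤ v j) → ∑ j, v j = 1 →
      (0 < ∫ x, ∏ j, p0 j x ^ v j ∂μ) ∧
        Integrable (fun x => ∏ j, p0 j x ^ v j) μ)
    (M : Matrix (Fin N) (Fin N) ℝ)
    (hMnn : ∀ i j, 0 ≤ M i j)
    (hMrow : ∀ i, ∑ j, M i j = 1)
    (p : ℕ → Fin N → Ω → ℝ)
    (hp0 : p 0 = p0)
    (hstep : ∀ n i x, p (n + 1) i x =
      (∏ j, p n j x ^ M i j) / ∫ y, ∏ j, p n j y ^ M i j ∂μ) :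
    ∀ (n : ℕ) (i : Fin N) (x : Ω),
      p n i x =
        (∏ j, p0 j x ^ (M ^ n) i j) / ∫ y, ∏ j, p0 j y ^ (M ^ n) i j ∂μ := by
  -- powers of a row-stochastic matrix are row-stochastic
  have hrow : ∀ n : ℕ, (∀ i j, 0 ≤ (M ^ n) i j) ∧ (∀ i, ∑ j, (M ^ n) i j = 1) := by
    intro n
    induction n with
    | zero =>
      constructor
      · intro i j
        by_cases h : i = j <;> simp [Matrix.one_apply, h]
      · intro i
        simp [Matrix.one_apply]
    | succ n ih =>
      constructor
      · intro i j
        rw [pow_succ', Matrix.mul_apply]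
        exact Finset.sum_nonneg fun k _ => mul_nonneg (hMnn i k) (ih.1 k j)
      · intro i
        simp only [pow_succ', Matrix.mul_apply]
        rw [Finset.sum_comm]
        simp_rw [← Finset.mul_sum, ih.2, mul_one, hMrow]
  intro n
  induction n with
  | zero =>
    intro i x
    have hB : ∀ y, ∏ j, p0 j y ^ ((M ^ 0) i j) = p0 i y := by
      intro y
      rw [pow_zero, Finset.prod_eq_single i]
      · simp [Matrix.one_apply]
      · intro j _ hj
        simp [Matrix.one_apply_ne' hj]
      · simp
    simp only [hB, hp0]
    rw [hnorm i, div_one]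
  | succ n ih =>
    intro i x
    set A : Fin N → Ω → ℝ := fun j y => ∏ k, p0 k y ^ (M ^ n) j k with hA
    set c : Fin N → ℝ := fun j => ∫ y, A j y ∂μ with hc
    have hApos : ∀ j y, 0 < A j y := fun j y =>
      Finset.prod_pos fun k _ => Real.rpow_pos_of_pos (hpos k y) _
    have hcpos : ∀ j, 0 < c j := fun j =>
      (hint _ (fun k => (hrow n).1 j k) ((hrow n).2 j)).1
    have hCpos : 0 < ∏ j, c j ^ M i j :=
      Finset.prod_pos fun j _ => Real.rpow_pos_of_pos (hcpos j) _
    have key : ∀ y, ∏ j, p n j y ^ M i j =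
        (∏ k, p0 k y ^ ((M ^ (n + 1)) i k)) / ∏ j, c j ^ M i j := by
      intro y
      have h1 : ∀ j, p n j y = A j y / c j := fun j => ih j y
      calc ∏ j, p n j y ^ M i j
          = ∏ j, (A j y ^ M i j / c j ^ M i j) := by
            refine Finset.prod_congr rfl fun j _ => ?_
            rw [h1 j, Real.div_rpow (hApos j y).le (hcpos j).le]
        _ = (∏ j, A j y ^ M i j) / ∏ j, c j ^ M i j := Finset.prod_div_distrib _ _
        _ = (∏ k, p0 k y ^ ((M ^ (n + 1)) i k)) / ∏ j, c j ^ M i j := by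
            congr 1
            calc ∏ j, A j y ^ M i j
                = ∏ j, ∏ k, p0 k y ^ ((M ^ n) j k * M i j) := by
                  refine Finset.prod_congr rfl fun j _ => ?_
                  rw [← Real.finset_prod_rpow _ _ (fun k _ => (Real.rpow_pos_of_pos (hpos k y) _).le)]
                  refine Finset.prod_congr rfl fun k _ => ?_
                  rw [← Real.rpow_mul (hpos k y).le]
              _ = ∏ k, ∏ j, p0 k y ^ ((M ^ n) j k * M i j) := Finset.prod_comm
              _ = ∏ k, p0 k y ^ (∑ j, (M ^ n) j k * M i j) := by
                  refine Finset.prod_congr rfl fun k _ => ?_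
                  rw [Real.rpow_sum_of_pos (hpos k y)]
              _ = ∏ k, p0 k y ^ ((M ^ (n + 1)) i k) := by
                  refine Finset.prod_congr rfl fun k _ => ?_
                  congr 1
                  rw [pow_succ', Matrix.mul_apply]
                  exact Finset.sum_congr rfl fun j _ => mul_comm _ _
    have hC : (∏ j, c j ^ M i j) ≠ 0 := hCpos.ne'
    have hint' := hint (fun k => (M ^ (n + 1)) i k) (fun k => (hrow (n + 1)).1 i k)
      ((hrow (n + 1)).2 i)
    rw [hstep n i x]
    simp only [key]
    rw [integral_div, div_div_div_comm, div_self hC, div_one]
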